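/- Let K ⊆ H be nonempty closed convex and f, g : C → H weakly homogeneous with degrees δ₁ > 0 and δ₂ > 0 respectively. Suppose g⁻¹(K) := {x ∈ C : g(x) ∈ K} is unbounded. If δ₁ + δ₂ < 2, then f is not strongly monotone with respect to g on K. -/

import Mathlib

open RealInnerProductSpace

lemma hom_bound {H : Type*} [NormedAddCommGroup H] [InnerProductSpace ℝ H]
    [FiniteDimensional ℝ H]
    (C : Set H) (hCcl : IsClosed C)
    (hCcone : ∀ x ∈ C, ∀ l : ℝ, 0 < l → l • x ∈ C)
    (δ : ℝ) (hδ : 0 < δ) (h : H → H)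
    (hhom : ∀ x ∈ C, ∀ l : ℝ, 0 < l → h (l • x) = l ^ δ • h x)
    (hc : ContinuousOn h C) :
    ∃ A : ℝ, 0 ≤ A ∧ ∀ x ∈ C, ‖h x‖ ≤ A * ‖x‖ ^ δ := by
  have hS : IsCompact (C ∩ Metric.sphere 0 1) :=
    ((isCompact_sphere (0 : H) 1).inter_left hCcl)
  obtain ⟨A₀, hA₀⟩ := hS.exists_bound_of_continuousOn (hc.mono Set.inter_subset_left)
  refine ⟨max A₀ 0, le_max_right _ _, fun x hx => ?_⟩
  rcases eq_or_ne x 0 with rfl | hx0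
  · have h2 := hhom 0 hx 2 (by norm_num)
    rw [smul_zero] at h2
    have hn : ‖h 0‖ = (2:ℝ) ^ δ * ‖h 0‖ := by
      conv_lhs => rw [h2]
      rw [norm_smul, Real.norm_eq_abs, abs_of_pos (Real.rpow_pos_of_pos two_pos δ)]
    have h1 : (1:ℝ) < (2:ℝ) ^ δ := Real.one_lt_rpow_iff_of_pos two_pos |>.2 (Or.inl ⟨one_lt_two, hδ⟩)
    have : ‖h 0‖ = 0 := by nlinarith [norm_nonneg (h 0)]
    rw [this, norm_zero, Real.zero_rpow hδ.ne', mul_zero]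
  · have hxpos : (0:ℝ) < ‖x‖ := norm_pos_iff.mpr hx0
    set u := ‖x‖⁻¹ • x with hu
    have huC : u ∈ C := hCcone x hx _ (inv_pos.mpr hxpos)
    have hunorm : ‖u‖ = 1 := by
      rw [hu, norm_smul, norm_inv, norm_norm, inv_mul_cancel₀ hxpos.ne']
    have hxu : x = ‖x‖ • u := by
      rw [hu, smul_smul, mul_inv_cancel₀ hxpos.ne', one_smul]
    have := hhom u huC ‖x‖ hxpos
    rw [← hxu] at this
    rw [this, norm_smul, Real.norm_eq_abs, abs_of_pos (Real.rpow_pos_of_pos hxpos δ)]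
    have hAu : ‖h u‖ ≤ max A₀ 0 :=
      le_trans (hA₀ u ⟨huC, by simpa [Metric.mem_sphere] using hunorm⟩) (le_max_left _ _)
    rw [mul_comm]
    exact mul_le_mul_of_nonneg_right hAu (Real.rpow_pos_of_pos hxpos δ).le

set_option maxHeartbeats 1000000 in
theorem not_strongMono_of_degree_sum_lt_two
    {H : Type*} [NormedAddCommGroup H] [InnerProductSpace ℝ H] [FiniteDimensional ℝ H]
    (C : Set H) (hCcl : IsClosed C) (hCconv : Convex ℝ C)
    (hCcone : ∀ x ∈ C, ∀ l : ℝ, 0 < l → l • x ∈ C)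
    (K : Set H) (hKne : K.Nonempty) (hKcl : IsClosed K) (hKconv : Convex ℝ K)
    (δ₁ δ₂ : ℝ) (hδ₁ : 0 < δ₁) (hδ₂ : 0 < δ₂)
    (f fInf fbar : H → H) (p : H) (g gInf gbar : H → H) (q : H)
    (hfdec : ∀ x ∈ C, f x = fInf x + fbar x + p)
    (hfhom : ∀ x ∈ C, ∀ l : ℝ, 0 < l → fInf (l • x) = l ^ δ₁ • fInf x)
    (hfc : ContinuousOn fInf C)
    (hfsmall : ∀ ε : ℝ, 0 < ε → ∃ M : ℝ, ∀ x ∈ C, M ≤ ‖x‖ → ‖fbar x‖ ≤ ε * ‖x‖ ^ δ₁)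
    (hgdec : ∀ x ∈ C, g x = gInf x + gbar x + q)
    (hghom : ∀ x ∈ C, ∀ l : ℝ, 0 < l → gInf (l • x) = l ^ δ₂ • gInf x)
    (hgc : ContinuousOn gInf C)
    (hgsmall : ∀ ε : ℝ, 0 < ε → ∃ M : ℝ, ∀ x ∈ C, M ≤ ‖x‖ → ‖gbar x‖ ≤ ε * ‖x‖ ^ δ₂)
    (hunb : ∀ M : ℝ, ∃ x ∈ C, g x ∈ K ∧ M ≤ ‖x‖)
    (hsum : δ₁ + δ₂ < 2) :
    ¬ ∃ c : ℝ, 0 < c ∧ ∀ x ∈ C, ∀ y ∈ C,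
        g x ∈ K → g y ∈ K → c * ‖x - y‖ ^ 2 ≤ ⟪f x - f y, g x - g y⟫ := by
  rintro ⟨c, hc, hmono⟩
  -- bounds for homogeneous parts
  obtain ⟨A, hA0, hA⟩ := hom_bound C hCcl hCcone δ₁ hδ₁ fInf hfhom hfc
  obtain ⟨B, hB0, hB⟩ := hom_bound C hCcl hCcone δ₂ hδ₂ gInf hghom hgc
  obtain ⟨Mf, hMf⟩ := hfsmall 1 one_pos
  obtain ⟨Mg, hMg⟩ := hgsmall 1 one_pos
  -- base point
  obtain ⟨y₀, hy₀C, hy₀K, -⟩ := hunb 0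
  set F : ℝ := A + 1 + ‖p‖ + ‖f y₀‖ with hF
  set G : ℝ := B + 1 + ‖q‖ + ‖g y₀‖ with hG
  have hFpos : 0 < F := by positivity
  have hGpos : 0 < G := by positivity
  set s : ℝ := δ₁ + δ₂ with hs
  have hspos : (0:ℝ) < 2 - s := by simp [hs]; linarith
  set R₀ : ℝ := (4 * F * G / c + 1) ^ (2 - s)⁻¹ with hR₀
  have hD0 : (0:ℝ) ≤ 4 * F * G / c := by positivity
  have hR₀pow : R₀ ^ (2 - s) = 4 * F * G / c + 1 :=
    Real.rpow_inv_rpow (by linarith) hspos.ne'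
  -- choose a far point
  obtain ⟨x, hxC, hxK, hxbig⟩ :=
    hunb (max (max 1 (2 * ‖y₀‖ + 1)) (max (max Mf Mg) R₀))
  set N : ℝ := ‖x‖ with hN
  have hN1 : (1:ℝ) ≤ N := le_trans (le_trans (le_max_left _ _) (le_max_left _ _)) hxbig
  have hNy : 2 * ‖y₀‖ + 1 ≤ N :=
    le_trans (le_trans (le_max_right _ _) (le_max_left _ _)) hxbig
  have hNMf : Mf ≤ N :=
    le_trans (le_trans (le_trans (le_max_left _ _) (le_max_left _ _)) (le_max_right _ _)) hxbig
  have hNMg : Mg ≤ N :=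
    le_trans (le_trans (le_trans (le_max_right _ _) (le_max_left _ _)) (le_max_right _ _)) hxbig
  have hNR₀ : R₀ ≤ N := le_trans (le_trans (le_max_right _ _) (le_max_right _ _)) hxbig
  have hNpos : (0:ℝ) < N := lt_of_lt_of_le one_pos hN1
  have hN1d1 : (1:ℝ) ≤ N ^ δ₁ := Real.one_le_rpow hN1 hδ₁.le
  have hN1d2 : (1:ℝ) ≤ N ^ δ₂ := Real.one_le_rpow hN1 hδ₂.le
  -- bound ‖f x - f y₀‖
  have hfx : ‖f x - f y₀‖ ≤ F * N ^ δ₁ := by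
    have h1 : ‖f x‖ ≤ (A + 1 + ‖p‖) * N ^ δ₁ := by
      rw [hfdec x hxC]
      calc ‖fInf x + fbar x + p‖ ≤ ‖fInf x‖ + ‖fbar x‖ + ‖p‖ :=
            le_trans (norm_add_le _ _) (add_le_add_left (norm_add_le _ _) _)
        _ ≤ A * N ^ δ₁ + 1 * N ^ δ₁ + ‖p‖ * N ^ δ₁ :=
            add_le_add (add_le_add (hA x hxC) (hMf x hxC hNMf))
              (by nlinarith [norm_nonneg p])
        _ = (A + 1 + ‖p‖) * N ^ δ₁ := by ring
    calc ‖f x - f y₀‖ ≤ ‖f x‖ + ‖f y₀‖ := norm_sub_le _ _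
      _ ≤ (A + 1 + ‖p‖) * N ^ δ₁ + ‖f y₀‖ * N ^ δ₁ := by
          refine add_le_add h1 ?_
          nlinarith [norm_nonneg (f y₀)]
      _ = F * N ^ δ₁ := by rw [hF]; ring
  have hgx : ‖g x - g y₀‖ ≤ G * N ^ δ₂ := by
    have h1 : ‖g x‖ ≤ (B + 1 + ‖q‖) * N ^ δ₂ := by
      rw [hgdec x hxC]
      calc ‖gInf x + gbar x + q‖ ≤ ‖gInf x‖ + ‖gbar x‖ + ‖q‖ :=
            le_trans (norm_add_le _ _) (add_le_add_left (norm_add_le _ _) _)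
        _ ≤ B * N ^ δ₂ + 1 * N ^ δ₂ + ‖q‖ * N ^ δ₂ :=
            add_le_add (add_le_add (hB x hxC) (hMg x hxC hNMg))
              (by nlinarith [norm_nonneg q])
        _ = (B + 1 + ‖q‖) * N ^ δ₂ := by ring
    calc ‖g x - g y₀‖ ≤ ‖g x‖ + ‖g y₀‖ := norm_sub_le _ _
      _ ≤ (B + 1 + ‖q‖) * N ^ δ₂ + ‖g y₀‖ * N ^ δ₂ := by
          refine add_le_add h1 ?_
          nlinarith [norm_nonneg (g y₀)]
      _ = G * N ^ δ₂ := by rw [hG]; ring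
  -- lower bound on ‖x - y₀‖
  have hdist : N / 2 ≤ ‖x - y₀‖ := by
    have := norm_sub_norm_le x y₀
    have h2 := abs_le.mp (abs_norm_sub_norm_le x y₀)
    linarith [h2.1]
  -- combine
  have hmain := hmono x hxC y₀ hy₀C hxK hy₀K
  have hCS : ⟪f x - f y₀, g x - g y₀⟫ ≤ ‖f x - f y₀‖ * ‖g x - g y₀‖ :=
    real_inner_le_norm _ _
  have hprod : ‖f x - f y₀‖ * ‖g x - g y₀‖ ≤ F * G * N ^ s := by
    rw [hs, Real.rpow_add hNpos]
    calc ‖f x - f y₀‖ * ‖g x - g y₀‖ ≤ (F * N ^ δ₁) * (G * N ^ δ₂) := by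
          exact mul_le_mul hfx hgx (norm_nonneg _) (by positivity)
      _ = F * G * (N ^ δ₁ * N ^ δ₂) := by ring
  have hsq : c * (N / 2) ^ 2 ≤ c * ‖x - y₀‖ ^ 2 := by
    have : (0:ℝ) ≤ N / 2 := by positivity
    gcongr
  have key : c / 4 * N ^ (2:ℝ) ≤ F * G * N ^ s := by
    have h2 : N ^ (2:ℝ) = N ^ (2:ℕ) := by
      rw [← Real.rpow_natCast]; norm_num
    rw [h2]
    calc c / 4 * N ^ (2:ℕ) = c * (N / 2) ^ 2 := by ring
      _ ≤ c * ‖x - y₀‖ ^ 2 := hsq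
      _ ≤ ⟪f x - f y₀, g x - g y₀⟫ := hmain
      _ ≤ ‖f x - f y₀‖ * ‖g x - g y₀‖ := hCS
      _ ≤ F * G * N ^ s := hprod
  -- derive contradiction
  have hsplit : N ^ (2:ℝ) = N ^ (2 - s) * N ^ s := by
    rw [← Real.rpow_add hNpos]; congr 1; ring
  have hNs : (0:ℝ) < N ^ s := Real.rpow_pos_of_pos hNpos s
  have h1 : c / 4 * N ^ (2 - s) ≤ F * G := by
    rw [hsplit] at key
    exact le_of_mul_le_mul_right (by rw [mul_assoc]; exact key) hNs
  have h2 : N ^ (2 - s) ≤ 4 * F * G / c := by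
    rw [le_div_iff₀ hc]
    nlinarith
  have h3 : 4 * F * G / c + 1 ≤ N ^ (2 - s) := by
    rw [← hR₀pow]
    exact Real.rpow_le_rpow (by positivity) hNR₀ hspos.le
  linarith
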